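/- For any partition (A,B,C) ∈ U, any finite tuples d⃗, e⃗ of equal length such that the map d_l ↦ e_l is a bijection preserving membership in 3ℕ ∪ (3ℕ+2), in N₀, and the companion relation, and any partition (G,H,I) ∈ U with appropriate correspondence (d_l ∈ A ⟹ e_l ∈ G's predecessor's first component, etc.): the triple (J,K,L) with J = Cl((A \ d⃗) ∪ f⁻¹(G)), K = ((B \ d⃗) ∪ f⁻¹(H)) \ J, L = ((C \ d⃗) ∪ f⁻¹(I)) \ J (where f = [d⃗ ↦ e⃗]) is again an element of U, provided B is infinite and (G,H,I) refines the image world. -/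
import Mathlib


open Classical Set

noncomputable section

/-- γ(n) = 3n+1 if n ≡ 0 or 2 (mod 3), else n. -/
def gam (n : ℕ) : ℕ := if n % 3 = 0 ∨ n % 3 = 2 then 3 * n + 1 else n

/-- R(x,y) ⟺ x = γ(y) ∨ y = γ(x). -/
def Rrel (x y : ℕ) : Prop := x = gam y ∨ y = gam x

/-- X closed under R. -/
def RClosed (X : Set ℕ) : Prop := ∀ x ∈ X, ∀ y, Rrel x y → y ∈ X

/-- Cl(X): the least R-closed superset of X. -/
def Cl (X : Set ℕ) : Set ℕ := ⋂₀ {Y | X ⊆ Y ∧ RClosed Y}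

/-- Cl⁻(X) = Cl(X) \ X. -/
def Clm (X : Set ℕ) : Set ℕ := Cl X \ X

/-- The companion ñ: the element ≠ n of Cl({n}) if one exists, else n. -/
def companion (n : ℕ) : ℕ :=
  if h : ∃ y, y ≠ n ∧ y ∈ Cl {n} then h.choose else n

def N0 : Set ℕ := {n | gam n = n}

def T0 : Set ℕ := {n | n % 3 = 0}
def T1 : Set ℕ := {n | n % 3 = 1}
def T2 : Set ℕ := {n | n % 3 = 2}
def T02 : Set ℕ := T0 ∪ T2

def v1 : Set ℕ := (Cl T2)ᶜ
def v2 : Set ℕ := Clm T2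
def v3 : Set ℕ := T2

/-- (A,B,C) is a partition of ℕ into three pairwise disjoint sets. -/
def IsPartition3 (A B C : Set ℕ) : Prop :=
  A ∪ B ∪ C = Set.univ ∧ Disjoint A B ∧ Disjoint A C ∧ Disjoint B C

/-- Membership in U: partition with v ⊴ (A,B,C), A closed, B ⊆ v₂. -/
def memU (A B C : Set ℕ) : Prop :=
  IsPartition3 A B C ∧ v1 ⊆ A ∧ C ⊆ v3 ∧ RClosed A ∧ B ⊆ v2

lemma Cl_subset {X Y : Set ℕ} (h1 : X ⊆ Y) (h2 : RClosed Y) : Cl X ⊆ Y :=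
  Set.sInter_subset_of_mem ⟨h1, h2⟩

lemma subset_Cl (X : Set ℕ) : X ⊆ Cl X :=
  Set.subset_sInter (fun _ hY => hY.1)

lemma RClosed_Cl (X : Set ℕ) : RClosed (Cl X) := by
  intro x hx y hxy
  intro Y hY
  exact hY.2 x (hx Y hY) y hxy

def Wset : Set ℕ := {n | n % 3 = 2 ∨ n % 9 = 7}

lemma RClosed_Wset : RClosed Wset := by
  intro x hx y hxy
  rcases hxy with rfl | rfl
  · -- x = gam y, hx : gam y ∈ Wset, show y ∈ Wset
    simp only [Wset, gam, Set.mem_setOf_eq] at hx ⊢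
    split at hx
    · omega
    · exact hx
  · -- y = gam x
    simp only [Wset, gam, Set.mem_setOf_eq] at hx ⊢
    split
    · omega
    · exact hx

lemma ClT2_sub_Wset : Cl T2 ⊆ Wset :=
  Cl_subset (fun n hn => Or.inl hn) RClosed_Wset

lemma mem_N0_iff (n : ℕ) : n ∈ N0 ↔ n % 3 = 1 := by
  simp only [N0, gam, Set.mem_setOf_eq]
  split <;> omega

lemma v2_sub_T1 : v2 ⊆ T1 := by
  rintro n ⟨h1, h2⟩
  have := ClT2_sub_Wset h1
  simp only [Wset, Set.mem_setOf_eq] at this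
  simp only [T2, Set.mem_setOf_eq] at h2
  simp only [T1, Set.mem_setOf_eq]
  omega

lemma T0_sub_v1 : T0 ⊆ v1 := by
  intro n hn hcl
  have := ClT2_sub_Wset hcl
  simp only [Wset, Set.mem_setOf_eq] at this
  simp only [T0, Set.mem_setOf_eq] at hn
  omega

lemma T1_sub_v1_union_v2 : T1 ⊆ v1 ∪ v2 := by
  intro n hn
  by_cases h : n ∈ Cl T2
  · right
    refine ⟨h, ?_⟩
    simp only [T1, Set.mem_setOf_eq] at hn
    simp only [T2, Set.mem_setOf_eq]
    omega
  · exact Or.inl h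

theorem claim1_asimulation {k : ℕ} (d e : Fin k → ℕ) (A B C G H I : Set ℕ)
    (hABC : memU A B C) (hBinf : B.Infinite) (hGHI : memU G H I)
    (hbij : ∀ l m, d l = d m ↔ e l = e m)
    (h02 : ∀ l, d l ∈ T02 ↔ e l ∈ T02)
    (hN0 : ∀ l, d l ∈ N0 ↔ e l ∈ N0)
    (hcomp : ∀ l m, d l = companion (d m) ↔ e l = companion (e m))
    (hA : ∀ l, d l ∈ A → e l ∈ G)
    (hB : ∀ l, d l ∈ B → e l ∈ G ∪ H) :
    memU (Cl ((A \ Set.range d) ∪ {m | ∃ l, m = d l ∧ e l ∈ G}))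
      (((B \ Set.range d) ∪ {m | ∃ l, m = d l ∧ e l ∈ H}) \
        Cl ((A \ Set.range d) ∪ {m | ∃ l, m = d l ∧ e l ∈ G}))
      (((C \ Set.range d) ∪ {m | ∃ l, m = d l ∧ e l ∈ I}) \
        Cl ((A \ Set.range d) ∪ {m | ∃ l, m = d l ∧ e l ∈ G})) := by
  obtain ⟨⟨hABCu, hAB, hAC, hBC⟩, hv1A, hCv3, hAcl, hBv2⟩ := hABC
  obtain ⟨⟨hGHIu, hGH, hGI, hHI⟩, hv1G, hIv3, hGcl, hHv2⟩ := hGHI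
  set DG : Set ℕ := {m | ∃ l, m = d l ∧ e l ∈ G} with hDGdef
  set DH : Set ℕ := {m | ∃ l, m = d l ∧ e l ∈ H} with hDHdef
  set DI : Set ℕ := {m | ∃ l, m = d l ∧ e l ∈ I} with hDIdef
  set S : Set ℕ := (A \ Set.range d) ∪ DG with hSdef
  -- key transfer facts
  have hdI : ∀ l, e l ∈ I → d l ∈ T2 := by
    intro l hel
    have h1 : e l ∈ T02 := Or.inr (hIv3 hel)
    have h2 : d l ∈ T02 := (h02 l).mpr h1
    rcases h2 with h2 | h2
    · exfalso
      have : d l ∈ A := hv1A (T0_sub_v1 h2)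
      exact Set.disjoint_left.mp hGI (hA l this) hel
    · exact h2
  have hdH : ∀ l, e l ∈ H → d l ∈ v2 := by
    intro l hel
    have h1 : e l ∈ N0 := by
      rw [mem_N0_iff]
      exact v2_sub_T1 (hHv2 hel)
    have h2 : d l ∈ T1 := (mem_N0_iff (d l)).mp ((hN0 l).mpr h1)
    rcases T1_sub_v1_union_v2 h2 with h3 | h3
    · exfalso
      have : d l ∈ A := hv1A h3
      exact Set.disjoint_left.mp hGH (hA l this) hel
    · exact h3
  have hSJ : S ⊆ Cl S := subset_Cl S
  refine ⟨⟨?_, ?_, ?_, ?_⟩, ?_, ?_, RClosed_Cl S, ?_⟩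
  · -- union = univ
    apply Set.eq_univ_of_forall
    intro n
    by_cases hn : n ∈ Cl S
    · exact Or.inl (Or.inl hn)
    · by_cases hd : n ∈ Set.range d
      · obtain ⟨l, rfl⟩ := hd
        have : e l ∈ G ∪ H ∪ I := hGHIu ▸ Set.mem_univ (e l)
        rcases this with (hG | hH) | hI
        · exact absurd (hSJ (Or.inr ⟨l, rfl, hG⟩)) hn
        · exact Or.inl (Or.inr ⟨Or.inr ⟨l, rfl, hH⟩, hn⟩)
        · exact Or.inr ⟨Or.inr ⟨l, rfl, hI⟩, hn⟩
      · have : n ∈ A ∪ B ∪ C := hABCu ▸ Set.mem_univ n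
        rcases this with (hA' | hB') | hC'
        · exact absurd (hSJ (Or.inl ⟨hA', hd⟩)) hn
        · exact Or.inl (Or.inr ⟨Or.inl ⟨hB', hd⟩, hn⟩)
        · exact Or.inr ⟨Or.inl ⟨hC', hd⟩, hn⟩
  · exact Set.disjoint_sdiff_right
  · exact Set.disjoint_sdiff_right
  · -- Disjoint K L
    rw [Set.disjoint_left]
    rintro n ⟨hK, -⟩ ⟨hL, -⟩
    rcases hK with ⟨hnB, hnd⟩ | ⟨l, rfl, hel⟩
    · rcases hL with ⟨hnC, -⟩ | ⟨l, hdl, -⟩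
      · exact Set.disjoint_left.mp hBC hnB hnC
      · exact hnd ⟨l, hdl.symm⟩
    · rcases hL with ⟨-, hnd⟩ | ⟨m, hdm, hem⟩
      · exact hnd ⟨l, rfl⟩
      · have : e l = e m := (hbij l m).mp hdm
        exact Set.disjoint_left.mp hHI hel (this ▸ hem)
  · -- v1 ⊆ J
    intro n hn
    by_cases hd : n ∈ Set.range d
    · obtain ⟨l, rfl⟩ := hd
      exact hSJ (Or.inr ⟨l, rfl, hA l (hv1A hn)⟩)
    · exact hSJ (Or.inl ⟨hv1A hn, hd⟩)
  · -- L ⊆ v3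
    rintro n ⟨hL, -⟩
    rcases hL with ⟨hnC, -⟩ | ⟨l, rfl, hel⟩
    · exact hCv3 hnC
    · exact hdI l hel
  · -- K ⊆ v2
    rintro n ⟨hK, -⟩
    rcases hK with ⟨hnB, -⟩ | ⟨l, rfl, hel⟩
    · exact hBv2 hnB
    · exact hdH l hel
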